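/- For every real R > 0, the quantity ω(R) := 2^{R+1} − 2^R·R·ln 2 − R·ln 2 − 2 is strictly negative. -/

import Mathlib

open Real

lemma aux_deriv (x : ℝ) :
    HasDerivAt (fun x : ℝ => Real.exp x * (2 - x) - (x + 2))
      (Real.exp x * (1 - x) - 1) x := by
  have h1 : HasDerivAt (fun x : ℝ => Real.exp x * (2 - x))
      (Real.exp x * (2 - x) + Real.exp x * (-1)) x := by
    exact (Real.hasDerivAt_exp x).mul ((hasDerivAt_id x).const_sub 2)
  have h2 : HasDerivAt (fun x : ℝ => x + 2) 1 x := (hasDerivAt_id x).add_const 2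
  have : HasDerivAt (fun x : ℝ => Real.exp x * (2 - x) - (x + 2))
      (Real.exp x * (2 - x) + Real.exp x * (-1) - 1) x := h1.sub h2
  convert this using 1
  ring

lemma aux_neg {x : ℝ} (hx : 0 < x) : Real.exp x * (2 - x) - (x + 2) < 0 := by
  have hanti : StrictAntiOn (fun x : ℝ => Real.exp x * (2 - x) - (x + 2)) (Set.Ici 0) := by
    apply strictAntiOn_of_deriv_neg (convex_Ici 0)
    · exact Continuous.continuousOn (by continuity)
    · intro y hy
      rw [interior_Ici] at hy
      rw [(aux_deriv y).deriv]
      have hy0 : (0:ℝ) < y := hy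
      have h1 : Real.exp (-y) > 1 - y := by
        have := Real.add_one_lt_exp (x := -y) (by linarith)
        linarith
      have h2 : Real.exp y * (1 - y) < Real.exp y * Real.exp (-y) := by
        exact mul_lt_mul_of_pos_left h1 (Real.exp_pos y)
      rw [← Real.exp_add] at h2
      simp at h2
      linarith
  have := hanti (Set.self_mem_Ici) (Set.mem_Ici.mpr hx.le) hx
  simpa using this

theorem omega_neg (R : ℝ) (hR : 0 < R) :
    (2 : ℝ) ^ (R + 1) - (2 : ℝ) ^ R * R * Real.log 2 - R * Real.log 2 - 2 < 0 := by
  have h2 : (0:ℝ) < 2 := by norm_num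
  have hlog : 0 < Real.log 2 := Real.log_pos (by norm_num)
  have ht : 0 < Real.log 2 * R := by positivity
  have hr1 : (2 : ℝ) ^ (R + 1) = Real.exp (Real.log 2 * R) * 2 := by
    rw [Real.rpow_def_of_pos h2]
    rw [mul_add, Real.exp_add]
    simp [Real.exp_log h2]
  have hr2 : (2 : ℝ) ^ R = Real.exp (Real.log 2 * R) := Real.rpow_def_of_pos h2 R
  rw [hr1, hr2]
  have := aux_neg ht
  nlinarith [Real.exp_pos (Real.log 2 * R)]
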